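/- Let p be a 1324-avoiding permutation, encoded as a pair of words (w(p), z(p)) over {A,B,C,D} via the greedy red/blue coloring with types A (red left-to-right minimum of the red subsequence), B (other red), C (blue non-right-to-left-maximum of the blue subsequence), D (blue right-to-left maximum of the blue subsequence), modified so that every right-to-left maximum of p that is not a left-to-right minimum of p is colored blue and marked D. Then for every i and every k ≥ 1: if the i-th letter A from the right in w(p) is immediately preceded by a C and immediately followed by k consecutive letters B, then the i-th segment from the left in z(p) contains at least k letters B. -/

import Mathlib

open Classical

def Avoids1324 {n : ℕ} (p : Equiv.Perm (Fin n)) : Prop :=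
  ¬ ∃ i j k l : Fin n, i < j ∧ j < k ∧ k < l ∧
    p i < p k ∧ p k < p j ∧ p j < p l

/-- The fixpoint characterization of the greedy red/blue coloring (rules (I)/(II)). -/
def GreedyColoring {n : ℕ} (p : Equiv.Perm (Fin n)) (blue0 : Fin n → Prop) : Prop :=
  ∀ i : Fin n, blue0 i ↔
    ∃ a b : Fin n, a < b ∧ b < i ∧ ¬ blue0 a ∧ ¬ blue0 b ∧ p a < p i ∧ p i < p b

def IsLtrMin {n : ℕ} (p : Equiv.Perm (Fin n)) (i : Fin n) : Prop :=
  ∀ j : Fin n, j < i → p i < p j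

def IsRtlMax {n : ℕ} (p : Equiv.Perm (Fin n)) (i : Fin n) : Prop :=
  ∀ j : Fin n, i < j → p j < p i

/-- The modified coloring: rule (4') additionally colors blue every right-to-left
maximum of `p` that is not a left-to-right minimum of `p`. -/
def Blue {n : ℕ} (p : Equiv.Perm (Fin n)) (blue0 : Fin n → Prop) (i : Fin n) : Prop :=
  blue0 i ∨ (IsRtlMax p i ∧ ¬ IsLtrMin p i)

/-- The type of the entry at position `i`:
`A = 0` (red left-to-right minimum of the red subsequence), `B = 1` (other red),
`C = 2` (blue non-right-to-left maximum of the blue subsequence), `D = 3`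
(blue right-to-left maximum of the blue subsequence). -/
noncomputable def typeOf {n : ℕ} (p : Equiv.Perm (Fin n)) (blue0 : Fin n → Prop)
    (i : Fin n) : Fin 4 :=
  if Blue p blue0 i then
    (if ∀ j : Fin n, i < j → Blue p blue0 j → p j < p i then 3 else 2)
  else
    (if ∀ j : Fin n, j < i → ¬ Blue p blue0 j → p i < p j then 0 else 1)

/-- `w(p)`: the `i`-th letter is the type of `p_i`. -/
noncomputable def wWord {n : ℕ} (p : Equiv.Perm (Fin n)) (blue0 : Fin n → Prop) :
    List (Fin 4) :=
  List.ofFn fun i => typeOf p blue0 i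

/-- `z(p)`: the `i`-th letter is the type of the entry of value `i`. -/
noncomputable def zWord {n : ℕ} (p : Equiv.Perm (Fin n)) (blue0 : Fin n → Prop) :
    List (Fin 4) :=
  List.ofFn fun i => typeOf p blue0 (p.symm i)

/-- The (increasing) list of positions of the letter `A` in a word. -/
def Apos (w : List (Fin 4)) : List ℕ :=
  (List.range w.length).filter (fun j => w[j]? = some (0 : Fin 4))

/-! ### Auxiliary lemmas -/

lemma pairwise_get?_count {r : ℕ → ℕ → Prop} [DecidableRel r] (hr : ∀ a b, r a b → ¬ r b a)
    {l : List ℕ} (hl : l.Pairwise r) :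
    ∀ {i a : ℕ}, l[i]? = some a → (l.filter (fun b => decide (r b a))).length = i := by
  induction l with
  | nil => intro i a h; simp at h
  | cons x t ih =>
    intro i a h
    rcases List.pairwise_cons.1 hl with ⟨hx, ht⟩
    match i with
    | 0 =>
      simp only [List.getElem?_cons_zero] at h
      have hxa : a = x := by injection h; omega
      subst hxa
      rw [List.length_eq_zero_iff, List.filter_eq_nil_iff]
      intro b hb
      simp only [decide_eq_true_eq]
      rcases List.mem_cons.1 hb with rfl | hb'
      · exact fun h' => hr b b h' h'
      · exact hr a b (hx b hb')
    | i+1 =>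
      simp only [List.getElem?_cons_succ] at h
      have ha : a ∈ t := List.mem_of_getElem? h
      have := ih ht h
      simp only [List.filter_cons, decide_eq_true_eq]
      rw [if_pos (hx a ha)]
      simp [this]

lemma pairwise_get?_of_count {r : ℕ → ℕ → Prop} [DecidableRel r] (hr : ∀ a b, r a b → ¬ r b a)
    {l : List ℕ} (hl : l.Pairwise r) :
    ∀ {i a : ℕ}, a ∈ l → (l.filter (fun b => decide (r b a))).length = i → l[i]? = some a := by
  induction l with
  | nil => intro i a h; simp at h
  | cons x t ih =>
    intro i a ha h
    rcases List.pairwise_cons.1 hl with ⟨hx, ht⟩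
    by_cases hax : a = x
    · subst hax
      have h0 : (List.filter (fun b => decide (r b a)) (a :: t)).length = 0 := by
        rw [List.length_eq_zero_iff, List.filter_eq_nil_iff]
        intro b hb
        simp only [decide_eq_true_eq]
        rcases List.mem_cons.1 hb with rfl | hb'
        · exact fun h' => hr b b h' h'
        · exact hr a b (hx b hb')
      rw [h0] at h
      subst h
      rfl
    · have ha' : a ∈ t := (List.mem_cons.1 ha).resolve_left hax
      have hxa : r x a := hx a ha'
      simp only [List.filter_cons, decide_eq_true_eq, if_pos hxa, List.length_cons] at h
      match i, h with
      | (m+1), h =>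
        have hm : (t.filter (fun b => decide (r b a))).length = m := by omega
        simpa using ih ht ha' hm

section Aux
variable {n : ℕ} (p : Equiv.Perm (Fin n)) (blue0 : Fin n → Prop)

lemma typeA_iff (i : Fin n) : typeOf p blue0 i = 0 ↔
    ¬ Blue p blue0 i ∧ ∀ j : Fin n, j < i → ¬ Blue p blue0 j → p i < p j := by
  unfold typeOf; split_ifs with h1 h2 h2 <;> simp_all

lemma typeB_iff (i : Fin n) : typeOf p blue0 i = 1 ↔
    ¬ Blue p blue0 i ∧ ¬ ∀ j : Fin n, j < i → ¬ Blue p blue0 j → p i < p j := by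
  unfold typeOf; split_ifs with h1 h2 h2 <;> simp_all

lemma typeC_iff (i : Fin n) : typeOf p blue0 i = 2 ↔
    Blue p blue0 i ∧ ¬ ∀ j : Fin n, i < j → Blue p blue0 j → p j < p i := by
  unfold typeOf; split_ifs with h1 h2 h2 <;> simp_all

lemma wWord_get?' {j : ℕ} (hj : j < n) :
    (wWord p blue0)[j]? = some (typeOf p blue0 ⟨j, hj⟩) := by
  simp [wWord, List.getElem?_ofFn, hj]

lemma zWord_get?' {j : ℕ} (hj : j < n) :
    (zWord p blue0)[j]? = some (typeOf p blue0 (p.symm ⟨j, hj⟩)) := by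
  simp [zWord, List.getElem?_ofFn, hj]

lemma wWord_length : (wWord p blue0).length = n := by simp [wWord]
lemma zWord_length : (zWord p blue0).length = n := by simp [zWord]

/-- A positions with larger index have smaller values. -/
lemma A_antitone {P R : Fin n} (hP : typeOf p blue0 P = 0) (hR : typeOf p blue0 R = 0)
    (h : P < R) : p R < p P := by
  obtain ⟨hBR, hmin⟩ := (typeA_iff p blue0 R).1 hR
  obtain ⟨hBP, -⟩ := (typeA_iff p blue0 P).1 hP
  exact hmin P h hBP

lemma A_lt_of_val {P R : Fin n} (hP : typeOf p blue0 P = 0) (hR : typeOf p blue0 R = 0)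
    (h : p R < p P) : P < R := by
  rcases lt_trichotomy P R with h' | h' | h'
  · exact h'
  · subst h'; exact absurd h (lt_irrefl _)
  · exact absurd (A_antitone p blue0 hR hP h') (by omega)

/-- Counting: the number of `A`-values below `p P` equals the number of
`A`-positions above `P`. -/
lemma countA {P : Fin n} (hP : typeOf p blue0 P = 0) :
    ((List.range n).filter
      (fun j => decide ((zWord p blue0)[j]? = some (0 : Fin 4)) && decide (j < (p P : ℕ)))).length
    = ((List.range n).filter
      (fun r => decide ((wWord p blue0)[r]? = some (0 : Fin 4)) && decide ((P : ℕ) < r))).length := by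
  have conv : ∀ q : ℕ → Bool, ((List.range n).filter q).length
      = ((Finset.range n).filter (fun x => q x = true)).card := by
    intro q
    simp [Finset.range, Finset.filter, Finset.card, Multiset.range]
  rw [conv, conv]
  set F : ℕ → ℕ := fun j => if h : j < n then ((p.symm ⟨j, h⟩ : Fin n) : ℕ) else 0 with hF
  set G : ℕ → ℕ := fun r => if h : r < n then ((p ⟨r, h⟩ : Fin n) : ℕ) else 0 with hG
  have hmem1 : ∀ j : ℕ, j ∈ Finset.filter
      (fun x => (decide ((zWord p blue0)[x]? = some (0 : Fin 4)) && decide (x < (p P : ℕ))) = true)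
      (Finset.range n) ↔ (j < n ∧ (zWord p blue0)[j]? = some (0 : Fin 4) ∧ j < (p P : ℕ)) := by
    intro j
    rw [Finset.mem_filter, Finset.mem_range, Bool.and_eq_true, decide_eq_true_eq,
      decide_eq_true_eq]
  have hmem2 : ∀ r : ℕ, r ∈ Finset.filter
      (fun x => (decide ((wWord p blue0)[x]? = some (0 : Fin 4)) && decide ((P : ℕ) < x)) = true)
      (Finset.range n) ↔ (r < n ∧ (wWord p blue0)[r]? = some (0 : Fin 4) ∧ (P : ℕ) < r) := by
    intro r
    rw [Finset.mem_filter, Finset.mem_range, Bool.and_eq_true, decide_eq_true_eq,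
      decide_eq_true_eq]
  apply Finset.card_nbij' (i := F) (j := G)
  · intro j hj
    rw [Finset.mem_coe, hmem1] at hj
    rw [Finset.mem_coe, hmem2]
    obtain ⟨hjn, hz, hjv⟩ := hj
    have hFj : F j = ((p.symm ⟨j, hjn⟩ : Fin n) : ℕ) := by rw [hF]; simp [hjn]
    set R : Fin n := p.symm ⟨j, hjn⟩ with hR
    have hzR : typeOf p blue0 R = 0 := by
      have := zWord_get?' p blue0 hjn
      rw [this] at hz
      exact Option.some.inj hz
    have hpR : p R = ⟨j, hjn⟩ := p.apply_symm_apply _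
    have hPR : P < R := A_lt_of_val p blue0 hP hzR (by rw [hpR]; exact hjv)
    rw [hFj]
    refine ⟨R.isLt, ?_, hPR⟩
    rw [wWord_get?' p blue0 R.isLt]
    simp only [Fin.eta]
    rw [hzR]
  · intro r hr
    rw [Finset.mem_coe, hmem2] at hr
    rw [Finset.mem_coe, hmem1]
    obtain ⟨hrn, hw, hrv⟩ := hr
    have hGr : G r = ((p ⟨r, hrn⟩ : Fin n) : ℕ) := by rw [hG]; simp [hrn]
    set R : Fin n := ⟨r, hrn⟩ with hRdef
    have hwR : typeOf p blue0 R = 0 := by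
      have := wWord_get?' p blue0 hrn
      rw [this] at hw
      exact Option.some.inj hw
    have hPR : P < R := hrv
    have hv : p R < p P := A_antitone p blue0 hP hwR hPR
    rw [hGr]
    refine ⟨(p R).isLt, ?_, hv⟩
    rw [zWord_get?' p blue0 (p R).isLt]
    simp only [Fin.eta, Equiv.symm_apply_apply]
    rw [hwR]
  · intro j hj
    rw [Finset.mem_coe, hmem1] at hj
    have hjn : j < n := hj.1
    simp only [hF, hG, hjn, dif_pos, Fin.eta, Fin.is_lt, Equiv.apply_symm_apply]
  · intro r hr
    rw [Finset.mem_coe, hmem2] at hr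
    have hrn : r < n := hr.1
    simp only [hF, hG, hrn, dif_pos, Fin.eta, Fin.is_lt, Equiv.symm_apply_apply]

end Aux

/-- If the `i`-th letter `A` from the right of `w(p)` is immediately preceded by a
`C` and immediately followed by `k` consecutive letters `B`, then the `i`-th segment
from the left of `z(p)` contains at least `k` letters `B`. -/
theorem cab_pow_k_condition {n : ℕ} (p : Equiv.Perm (Fin n))
    (blue0 : Fin n → Prop) (hp : Avoids1324 p) (hb : GreedyColoring p blue0) :
    ∀ i k pos : ℕ, 1 ≤ k →
      (Apos (wWord p blue0)).reverse[i]? = some pos →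
      1 ≤ pos →
      (wWord p blue0)[pos - 1]? = some (2 : Fin 4) →
      (∀ j : ℕ, 1 ≤ j → j ≤ k →
        (wWord p blue0)[pos + j]? = some (1 : Fin 4)) →
      k ≤ Nat.card {j : ℕ //
        (zWord p blue0)[j]? = some (1 : Fin 4) ∧
        (∃ a, (Apos (zWord p blue0))[i]? = some a ∧ a < j) ∧
        (∀ b, (Apos (zWord p blue0))[i + 1]? = some b → j < b)} := by
  intro i k pos hk hrev hpos1 hCw h4
  have hlw := wWord_length p blue0
  have hlz := zWord_length p blue0
  have hltasym : ∀ a b : ℕ, a < b → ¬ b < a := by omega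
  have hgtasym : ∀ a b : ℕ, a > b → ¬ b > a := by omega
  -- position facts
  have hmem : pos ∈ Apos (wWord p blue0) := List.mem_reverse.1 (List.mem_of_getElem? hrev)
  have hmem' := List.mem_filter.1 (by unfold Apos at hmem; exact hmem)
  have hposn : pos < n := by
    have := List.mem_range.1 hmem'.1
    omega
  have hposk : pos + k < n := by
    by_contra h
    have h0 : (wWord p blue0)[pos + k]? = none :=
      List.getElem?_eq_none (by rw [hlw]; omega)
    rw [h4 k hk le_rfl] at h0
    cases h0
  -- the A at pos
  have hPA : typeOf p blue0 (⟨pos, hposn⟩ : Fin n) = 0 := by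
    have hw := hmem'.2
    rw [decide_eq_true_eq] at hw
    rw [wWord_get?' p blue0 hposn] at hw
    exact Option.some.inj hw
  set P : Fin n := ⟨pos, hposn⟩ with hPdef
  have hPval : (P : ℕ) = pos := rfl
  -- the C at pos - 1
  have hCn : pos - 1 < n := by omega
  set C : Fin n := ⟨pos - 1, hCn⟩ with hCdef
  have hCval : (C : ℕ) = pos - 1 := rfl
  have hCt : typeOf p blue0 C = 2 := by
    rw [wWord_get?' p blue0 hCn] at hCw
    exact Option.some.inj hCw
  -- the B's at pos + t
  have hQt : ∀ t : ℕ, ∀ h1 : 1 ≤ t, ∀ h2 : t ≤ k,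
      typeOf p blue0 (⟨pos + t, by omega⟩ : Fin n) = 1 := by
    intro t h1 h2
    have := h4 t h1 h2
    rw [wWord_get?' p blue0 (show pos + t < n by omega)] at this
    exact Option.some.inj this
  obtain ⟨hPred, hPmin⟩ := (typeA_iff p blue0 P).1 hPA
  obtain ⟨hCblue, hCnot⟩ := (typeC_iff p blue0 C).1 hCt
  push_neg at hCnot
  obtain ⟨d, hCd, hdBlue, hdge⟩ := hCnot
  have hpCd : p C < p d :=
    lt_of_le_of_ne hdge (fun h => (ne_of_gt hCd) (p.injective h.symm))
  have hCblue0 : blue0 C := by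
    rcases hCblue with h | ⟨hrtl, _⟩
    · exact h
    · exact absurd (hrtl d hCd) (not_lt.2 hdge)
  obtain ⟨a', b', hab, hbC, hra, hrb, hpa, hpb⟩ := (hb C).1 hCblue0
  -- values of the B's exceed p P
  have hgrow : ∀ t : ℕ, ∀ h1 : 1 ≤ t, ∀ h2 : t ≤ k,
      p P < p (⟨pos + t, by omega⟩ : Fin n) := by
    intro t
    induction t using Nat.strong_induction_on with
    | _ t ih =>
      intro h1 h2
      set Q : Fin n := ⟨pos + t, by omega⟩ with hQdef
      obtain ⟨hQred, hQnm⟩ := (typeB_iff p blue0 Q).1 (hQt t h1 h2)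
      push_neg at hQnm
      obtain ⟨j, hjQ, hjred, hjle⟩ := hQnm
      have hjlt : p j < p Q :=
        lt_of_le_of_ne hjle (fun h => (ne_of_lt hjQ) (p.injective h))
      have hjval : (j : ℕ) < pos + t := hjQ
      rcases lt_trichotomy (j : ℕ) pos with hc | hc | hc
      · have hjP : j < P := by rw [Fin.lt_def]; exact hc
        exact lt_trans (hPmin j hjP hjred) hjlt
      · have : j = P := Fin.ext hc
        rw [← this]
        exact hjlt
      · have hs1 : 1 ≤ (j : ℕ) - pos := by omega
        have hs2 : (j : ℕ) - pos < t := by omega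
        have := ih ((j : ℕ) - pos) hs2 hs1 (by omega)
        have hje : (⟨pos + ((j : ℕ) - pos), by omega⟩ : Fin n) = j := Fin.ext (by simp; omega)
        rw [hje] at this
        exact lt_trans this hjlt
  -- values of the B's are below every A-value exceeding p P
  have hmain : ∀ t : ℕ, ∀ h1 : 1 ≤ t, ∀ h2 : t ≤ k, ∀ q : Fin n,
      typeOf p blue0 q = 0 → p P < p q →
      p (⟨pos + t, by omega⟩ : Fin n) < p q := by
    intro t h1 h2 q hqA hPq
    set Q : Fin n := ⟨pos + t, by omega⟩ with hQdef
    by_contra hcon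
    push_neg at hcon
    obtain ⟨hQred, -⟩ := (typeB_iff p blue0 Q).1 (hQt t h1 h2)
    have hqQ : q ≠ Q := by
      intro h
      rw [h, hQt t h1 h2] at hqA
      exact absurd hqA (by decide)
    have hpqQ : p q < p Q := lt_of_le_of_ne hcon (fun h => hqQ (p.injective h))
    obtain ⟨hqred, hqmin⟩ := (typeA_iff p blue0 q).1 hqA
    have hqP : q < P := by
      rcases lt_trichotomy q P with h | h | h
      · exact h
      · rw [h] at hPq; exact absurd hPq (lt_irrefl _)
      · exact absurd hPq (not_lt.2 (le_of_lt (hqmin P h hPred)))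
    have hqC : q < C := by
      have h1' : (q : ℕ) < pos := hqP
      have h2' : q ≠ C := fun h => by
        rw [h, hCt] at hqA; exact absurd hqA (by decide)
      have h3' : (q : ℕ) ≠ pos - 1 := fun h => h2' (Fin.ext h)
      rw [Fin.lt_def]
      simp only [hCdef]
      omega
    have hQC : C < Q := by rw [Fin.lt_def]; simp only [hCdef, hQdef]; omega
    have hQredb0 : ¬ blue0 Q := fun h => hQred (Or.inl h)
    rcases lt_trichotomy (p C) (p Q) with hcase | hcase | hcase
    · have hb'Q : p b' < p Q := by
        by_contra hc
        push_neg at hc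
        have hne : b' ≠ Q := ne_of_lt (lt_trans hbC hQC)
        have hlt : p Q < p b' := lt_of_le_of_ne hc (fun h => hne (p.injective h.symm))
        exact hQredb0 ((hb Q).2
          ⟨a', b', hab, lt_trans hbC hQC, hra, hrb, lt_trans hpa hcase, hlt⟩)
      exact hp ⟨a', b', C, Q, hab, hbC, hQC, hpa, hpb, hb'Q⟩
    · exact absurd (p.injective hcase) (ne_of_lt hQC)
    · have hdpos : pos + k < (d : ℕ) := by
        by_contra hdc
        push_neg at hdc
        have hd1 : (pos : ℕ) - 1 < (d : ℕ) := hCd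
        rcases Nat.lt_or_ge (d : ℕ) pos with hlt | hge
        · omega
        · set s := (d : ℕ) - pos with hsdef
          have hds : d = (⟨pos + s, by omega⟩ : Fin n) := Fin.ext (by simp; omega)
          by_cases hs : s = 0
          · have hdP : d = P := Fin.ext (by simp only [hPdef]; omega)
            rw [hdP] at hdBlue
            exact hPred hdBlue
          · have hB := (typeB_iff p blue0 ⟨pos + s, by omega⟩).1 (hQt s (by omega) (by omega))
            rw [hds] at hdBlue
            exact hB.1 hdBlue
      have hQd : Q < d := by rw [Fin.lt_def]; simp only [hQdef]; omega
      exact hp ⟨q, C, Q, d, hqC, hQC, hQd, hpqQ, hcase, hpCd⟩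
  -- sortedness facts
  have hawS : (Apos (wWord p blue0)).Pairwise (· < ·) :=
    List.Pairwise.filter _ (List.pairwise_lt_range)
  have hazS : (Apos (zWord p blue0)).Pairwise (· < ·) :=
    List.Pairwise.filter _ (List.pairwise_lt_range)
  have hrevS : (Apos (wWord p blue0)).reverse.Pairwise (· > ·) := by
    rw [List.pairwise_reverse]; exact hawS
  -- count of A's after pos in w
  have hcount_w : ((Apos (wWord p blue0)).filter (fun b => decide (pos < b))).length = i := by
    have h0 := pairwise_get?_count (r := (· > ·)) hgtasym hrevS hrev
    rw [List.filter_reverse, List.length_reverse] at h0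
    rw [← h0]
  -- identify filters with canonical range filters
  have e1 : (Apos (wWord p blue0)).filter (fun b => decide (pos < b))
      = (List.range n).filter
        (fun r => decide ((wWord p blue0)[r]? = some (0 : Fin 4)) && decide ((P : ℕ) < r)) := by
    unfold Apos
    rw [hlw, List.filter_filter]
    apply List.filter_congr
    intro a _
    simp [Bool.and_comm, hPval]
  have e2 : (Apos (zWord p blue0)).filter (fun b => decide (b < (p P : ℕ)))
      = (List.range n).filter
        (fun j => decide ((zWord p blue0)[j]? = some (0 : Fin 4)) && decide (j < (p P : ℕ))) := by
    unfold Apos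
    rw [hlz, List.filter_filter]
    apply List.filter_congr
    intro a _
    simp [Bool.and_comm]
  have hcz : ((Apos (zWord p blue0)).filter (fun b => decide (b < (p P : ℕ)))).length = i := by
    rw [e2, countA p blue0 hPA, ← e1, hcount_w]
  -- p P is in Apos z
  have hPAz : ((p P : ℕ)) ∈ Apos (zWord p blue0) := by
    unfold Apos
    rw [hlz]
    refine List.mem_filter.2 ⟨List.mem_range.2 (p P).isLt, ?_⟩
    rw [decide_eq_true_eq, zWord_get?' p blue0 (p P).isLt]
    simp only [Fin.eta, Equiv.symm_apply_apply]
    rw [hPA]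
  have hget_z : (Apos (zWord p blue0))[i]? = some ((p P : ℕ)) :=
    pairwise_get?_of_count (r := (· < ·)) hltasym hazS hPAz hcz
  -- the (i+1)-st A of z is above all B values
  have hbpart : ∀ b : ℕ, (Apos (zWord p blue0))[i + 1]? = some b →
      ∀ t : ℕ, ∀ h1 : 1 ≤ t, ∀ h2 : t ≤ k,
      ((p (⟨pos + t, by omega⟩ : Fin n)) : ℕ) < b := by
    intro b hbz t h1 h2
    have hbmem : b ∈ Apos (zWord p blue0) := List.mem_of_getElem? hbz
    have hbmem' := List.mem_filter.1 (by unfold Apos at hbmem; exact hbmem)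
    have hbn : b < n := by
      have := List.mem_range.1 hbmem'.1
      omega
    have hbA : typeOf p blue0 (p.symm ⟨b, hbn⟩) = 0 := by
      have hzb := hbmem'.2
      rw [decide_eq_true_eq] at hzb
      rw [zWord_get?' p blue0 hbn] at hzb
      exact Option.some.inj hzb
    have hcb : ((Apos (zWord p blue0)).filter (fun x => decide (x < b))).length = i + 1 :=
      pairwise_get?_count (r := (· < ·)) hltasym hazS hbz
    have hPb : (p P : ℕ) < b := by
      rcases lt_trichotomy b ((p P : ℕ)) with hc | hc | hc
      · have hmono : ((Apos (zWord p blue0)).filter (fun x => decide (x < b))).length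
            ≤ ((Apos (zWord p blue0)).filter (fun x => decide (x < (p P : ℕ)))).length := by
          rw [← List.countP_eq_length_filter, ← List.countP_eq_length_filter]
          apply List.countP_mono_left
          intro a _
          simp only [decide_eq_true_eq]
          omega
        rw [hcb, hcz] at hmono
        omega
      · rw [hc] at hcb
        rw [hcz] at hcb
        omega
      · exact hc
    set q : Fin n := p.symm ⟨b, hbn⟩ with hqdef
    have hpq : p q = ⟨b, hbn⟩ := p.apply_symm_apply _
    have hPq : p P < p q := by rw [Fin.lt_def, hpq]; exact hPb
    have := hmain t h1 h2 q hbA hPq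
    rw [Fin.lt_def, hpq] at this
    exact this
  -- assemble the injection (rest below)
  set S := {j : ℕ //
      (zWord p blue0)[j]? = some (1 : Fin 4) ∧
      (∃ a, (Apos (zWord p blue0))[i]? = some a ∧ a < j) ∧
      (∀ b, (Apos (zWord p blue0))[i + 1]? = some b → j < b)} with hSdef
  have hSn : ∀ s : S, s.1 < n := by
    intro s
    by_contra hc
    have h0 : (zWord p blue0)[s.1]? = none := List.getElem?_eq_none (by rw [hlz]; omega)
    rw [s.2.1] at h0
    cases h0
  have hfin : Finite S := by
    apply Finite.of_injective (fun s : S => (⟨s.1, hSn s⟩ : Fin n))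
    intro x y h
    apply Subtype.ext
    exact congrArg Fin.val h
  have hzB : ∀ t : ℕ, ∀ h1 : 1 ≤ t, ∀ h2 : t ≤ k,
      (zWord p blue0)[((p (⟨pos + t, by omega⟩ : Fin n)) : ℕ)]? = some (1 : Fin 4) := by
    intro t h1 h2
    rw [zWord_get?' p blue0 (p (⟨pos + t, by omega⟩ : Fin n)).isLt]
    simp only [Fin.eta, Equiv.symm_apply_apply]
    rw [hQt t h1 h2]
  have hcard := Nat.card_le_card_of_injective
    (fun t : Fin k => (⟨((p (⟨pos + (t.1 + 1), by omega⟩ : Fin n)) : ℕ),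
      hzB (t.1 + 1) (by omega) (by omega),
      ⟨(p P : ℕ), hget_z, by
        have hg := hgrow (t.1 + 1) (by omega) (by omega)
        rw [Fin.lt_def] at hg
        exact hg⟩,
      fun b hbz => hbpart b hbz (t.1 + 1) (by omega) (by omega)⟩ : S))
    (by
      intro x y h
      have h1 := congrArg (fun s : S => s.1) h
      simp only at h1
      have h2 : (⟨pos + (x.1 + 1), by omega⟩ : Fin n) = ⟨pos + (y.1 + 1), by omega⟩ :=
        p.injective (Fin.val_injective h1)
      have h3 : pos + (x.1 + 1) = pos + (y.1 + 1) := congrArg Fin.val h2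
      exact Fin.ext (by omega))
  have hck : Nat.card (Fin k) = k := by simp [Nat.card_eq_fintype_card]
  rw [hck] at hcard
  exact hcard
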